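/- Let n ≥ 1, let J ∈ GL_{2n}(ℝ) be the antidiagonal matrix with entries J_{i,2n+1−i} = 1, and let θ(g) = J · ᵗg⁻¹ · J for g ∈ GL_{2n}(ℝ). Let γ ∈ GL_{2n}(ℝ) be such that δ := θ(γ)·γ has 2n pairwise distinct complex eigenvalues, at least one of which has absolute value different from 1. Then there exist x ∈ GL_{2n}(ℝ) and i ∈ {1, 2} with 2i ≤ 2n such that x⁻¹ γ θ(x) lies in the standard block-diagonal subgroup GL_i × GL_{2n−2i} × GL_i of GL_{2n}(ℝ) (matrices that are block diagonal with blocks of sizes i, 2n−2i, i); this subgroup is the Levi subgroup of a proper θ-stable standard parabolic. -/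

import Mathlib

open Matrix Polynomial

/-- The antidiagonal matrix `J` of size `m` over `ℝ`, with `J_{i, m+1-i} = 1` (1-indexed). -/
def Jmat (m : ℕ) : Matrix (Fin m) (Fin m) ℝ :=
  Matrix.of fun i j => if (i : ℕ) + (j : ℕ) = m - 1 then 1 else 0

/-- The involutive automorphism `θ(g) = J ᵗg⁻¹ J` of `GL_m(ℝ)`. -/
noncomputable def theta (m : ℕ) (g : Matrix (Fin m) (Fin m) ℝ) :
    Matrix (Fin m) (Fin m) ℝ :=
  Jmat m * (g⁻¹)ᵀ * Jmat m

/-- The block (`0`, `1` or `2`) in which an index falls, for blocks of sizes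
`(i, 2n−2i, i)`. -/
def blockIdx (n i : ℕ) (a : Fin (2 * n)) : ℕ :=
  if (a : ℕ) < i then 0 else if (a : ℕ) < 2 * n - i then 1 else 2

/-- `m` lies in the standard block-diagonal subgroup `GL_i × GL_{2n−2i} × GL_i`:
all entries outside the three diagonal blocks of sizes `(i, 2n−2i, i)` vanish. -/
def IsBlockDiag (n i : ℕ) (m : Matrix (Fin (2 * n)) (Fin (2 * n)) ℝ) : Prop :=
  ∀ a b : Fin (2 * n), blockIdx n i a ≠ blockIdx n i b → m a b = 0

lemma Jmat_apply (m : ℕ) (a b : Fin m) :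
    Jmat m a b = if (a : ℕ) + (b : ℕ) = m - 1 then 1 else 0 := rfl

lemma Jmat_mul_self (m : ℕ) : Jmat m * Jmat m = 1 := by
  ext a b
  have ha := a.is_lt
  have hb := b.is_lt
  rw [Matrix.mul_apply, Finset.sum_eq_single (Fin.rev a)]
  · have hra := (Fin.rev a).is_lt
    have hr : (Fin.rev a : ℕ) = m - 1 - a := by rw [Fin.val_rev]; omega
    have h1 : (a : ℕ) + (Fin.rev a : ℕ) = m - 1 := by omega
    rw [Jmat_apply, Jmat_apply, if_pos h1, Matrix.one_apply]
    by_cases hba : a = b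
    · rw [if_pos hba, if_pos (by omega : (Fin.rev a : ℕ) + (b : ℕ) = m - 1), one_mul]
    · have : ¬ ((Fin.rev a : ℕ) + (b : ℕ) = m - 1) := by
        intro h; exact hba (Fin.ext (by omega))
      rw [if_neg this, if_neg hba, mul_zero]
  · intro j _ hj
    have hjv := j.is_lt
    have : ¬ ((a : ℕ) + (j : ℕ) = m - 1) := by
      intro h; apply hj; apply Fin.ext; rw [Fin.val_rev]; omega
    rw [Jmat_apply, if_neg this, zero_mul]
  · intro h; exact absurd (Finset.mem_univ _) h

lemma Jmat_transpose (m : ℕ) : (Jmat m)ᵀ = Jmat m := by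
  ext a b; simp [Jmat, Matrix.transpose_apply, Nat.add_comm]

lemma isUnit_Jmat (m : ℕ) : IsUnit (Jmat m) :=
  ⟨⟨Jmat m, Jmat m, Jmat_mul_self m, Jmat_mul_self m⟩, rfl⟩

lemma my_eval_charpoly {N : ℕ} {R : Type*} [CommRing R] (M : Matrix (Fin N) (Fin N) R) (x : R) :
    M.charpoly.eval x = (x • (1 : Matrix (Fin N) (Fin N) R) - M).det := by
  rw [Matrix.charpoly, eval_det, Matrix.matPolyEquiv_charmatrix]
  congr 1
  simp [Matrix.scalar, smul_eq_diagonal_mul]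

lemma monotone_three_blocks {N i : ℕ} {g : Fin N → ℕ} (hm : Monotone g) (hle : ∀ a, g a ≤ 2)
    (h0 : (Finset.univ.filter fun a => g a = 0).card = i)
    (h2 : (Finset.univ.filter fun a => g a = 2).card = i) :
    ∀ a : Fin N, g a = if (a : ℕ) < i then 0 else if (a : ℕ) < N - i then 1 else 2 := by
  have hA : ∀ a : Fin N, g a = 0 ↔ (a : ℕ) < i := by
    intro a
    constructor
    · intro h
      have hsub : Finset.Iic a ⊆ Finset.univ.filter fun b => g b = 0 := by
        intro b hb
        rw [Finset.mem_filter]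
        exact ⟨Finset.mem_univ _, Nat.le_zero.mp (h ▸ hm (Finset.mem_Iic.mp hb))⟩
      have := Finset.card_le_card hsub
      rw [Fin.card_Iic, h0] at this
      omega
    · intro h
      by_contra hne
      have hsub : (Finset.univ.filter fun b => g b = 0) ⊆ Finset.Iio a := by
        intro b hb
        rw [Finset.mem_filter] at hb
        rw [Finset.mem_Iio]
        by_contra hab
        exact hne (Nat.le_zero.mp (hb.2 ▸ hm (le_of_not_gt hab)))
      have := Finset.card_le_card hsub
      rw [Fin.card_Iio, h0] at this
      omega
  have hC : ∀ a : Fin N, g a = 2 ↔ N - i ≤ (a : ℕ) := by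
    intro a
    have hav := a.is_lt
    constructor
    · intro h
      have hsub : Finset.Ici a ⊆ Finset.univ.filter fun b => g b = 2 := by
        intro b hb
        rw [Finset.mem_filter]
        have := hm (Finset.mem_Ici.mp hb)
        have := hle b
        exact ⟨Finset.mem_univ _, by omega⟩
      have := Finset.card_le_card hsub
      rw [Fin.card_Ici, h2] at this
      omega
    · intro h
      by_contra hne
      have hsub : (Finset.univ.filter fun b => g b = 2) ⊆ Finset.Ioi a := by
        intro b hb
        rw [Finset.mem_filter] at hb
        rw [Finset.mem_Ioi]
        by_contra hab
        have := hm (le_of_not_gt hab)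
        have := hle a
        omega
      have := Finset.card_le_card hsub
      rw [Fin.card_Ioi, h2] at this
      omega
  intro a
  have h1 := hA a
  have h3 := hC a
  have h4 := hle a
  have h5 := a.is_lt
  split_ifs with h h' <;> omega

lemma blockIdx_le_two {n i : ℕ} (a : Fin (2 * n)) : blockIdx n i a ≤ 2 := by
  unfold blockIdx; split_ifs <;> omega

lemma blockIdx_rev {n i : ℕ} (h2i : 2 * i ≤ 2 * n) (e b : Fin (2 * n))
    (h : (e : ℕ) + (b : ℕ) = 2 * n - 1) : blockIdx n i e = 2 - blockIdx n i b := by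
  have := e.is_lt
  have := b.is_lt
  unfold blockIdx
  split_ifs <;> omega

/-- Let `γ ∈ GL_{2n}(ℝ)` be such that `δ = θ(γ)γ` has `2n` pairwise
distinct complex eigenvalues (expressed via its characteristic polynomial over `ℂ`), one
of which has absolute value `≠ 1`. Then `γ` is `θ`-conjugate to an element of the Levi
subgroup `GL_i × GL_{2n−2i} × GL_i` of a proper `θ`-stable standard parabolic, for
`i = 1` or `i = 2`. -/
theorem strongly_regular_not_elliptic_conjugate_into_Levi
    (n : ℕ) (hn : 1 ≤ n)
    (γ : Matrix (Fin (2 * n)) (Fin (2 * n)) ℝ) (hγ : IsUnit γ)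
    (μ : Fin (2 * n) → ℂ) (hinj : Function.Injective μ)
    (hchar : ((theta (2 * n) γ * γ).map (algebraMap ℝ ℂ)).charpoly =
      ∏ i : Fin (2 * n), (X - C (μ i)))
    (habs : ∃ i, ‖μ i‖ ≠ 1) :
    ∃ (x : Matrix (Fin (2 * n)) (Fin (2 * n)) ℝ) (i : ℕ), IsUnit x ∧
      (i = 1 ∨ i = 2) ∧ 2 * i ≤ 2 * n ∧
      IsBlockDiag n i (x⁻¹ * γ * theta (2 * n) x) := by
  classical
  set f := algebraMap ℝ ℂ with hf
  set δ : Matrix (Fin (2 * n)) (Fin (2 * n)) ℝ := theta (2 * n) γ * γ with hδdef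
  set Jc : Matrix (Fin (2 * n)) (Fin (2 * n)) ℂ := (Jmat (2 * n)).map f with hJcdef
  set γc : Matrix (Fin (2 * n)) (Fin (2 * n)) ℂ := γ.map f with hγcdef
  set δc : Matrix (Fin (2 * n)) (Fin (2 * n)) ℂ := δ.map f with hδcdef
  -- basic units
  have hγdet : IsUnit γ.det := (Matrix.isUnit_iff_isUnit_det γ).mp hγ
  have hJu : IsUnit (Jmat (2 * n)) := isUnit_Jmat _
  have hθγ : IsUnit (theta (2 * n) γ) := by
    unfold theta
    exact (hJu.mul ((Matrix.isUnit_transpose _).mpr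
      ((Matrix.isUnit_nonsing_inv_iff).mpr hγ))).mul hJu
  have hδu : IsUnit δ := hθγ.mul hγ
  have hmapu : ∀ A : Matrix (Fin (2 * n)) (Fin (2 * n)) ℝ, IsUnit A → IsUnit (A.map f) := by
    intro A hA
    rw [Matrix.isUnit_iff_isUnit_det]
    have hd : (A.map f).det = f A.det := (RingHom.map_det f A).symm
    rw [hd]
    exact ((Matrix.isUnit_iff_isUnit_det A).mp hA).map f
  have hγcu : IsUnit γc := hmapu γ hγ
  have hδcu : IsUnit δc := hmapu δ hδu
  have hJc2 : Jc * Jc = 1 := by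
    rw [hJcdef, ← Matrix.map_mul, Jmat_mul_self, Matrix.map_one f (map_zero f) (map_one f)]
  have hJcu : IsUnit Jc := ⟨⟨Jc, Jc, hJc2, hJc2⟩, rfl⟩
  have hJcT : Jcᵀ = Jc := by
    rw [hJcdef, ← Matrix.transpose_map, Jmat_transpose]
  have hJcinv : Jc⁻¹ = Jc := Matrix.inv_eq_right_inv hJc2
  have hmapinv : ∀ A : Matrix (Fin (2 * n)) (Fin (2 * n)) ℝ, IsUnit A →
      (A⁻¹).map f = (A.map f)⁻¹ := by
    intro A hA
    symm
    apply Matrix.inv_eq_left_inv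
    rw [← Matrix.map_mul, Matrix.nonsing_inv_mul A ((Matrix.isUnit_iff_isUnit_det A).mp hA),
      Matrix.map_one f (map_zero f) (map_one f)]
  -- δc in terms of γc
  have hδcf : δc = Jc * (γc⁻¹)ᵀ * Jc * γc := by
    rw [hδcdef, hδdef]
    unfold theta
    simp only [Matrix.map_mul]
    rw [Matrix.transpose_map, hmapinv γ hγ]
  -- key identity
  have hγcinvu : IsUnit γc⁻¹ := (Matrix.isUnit_nonsing_inv_iff).mpr hγcu
  have hγcdet : IsUnit γc.det := (Matrix.isUnit_iff_isUnit_det γc).mp hγcu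
  have hδcdet : IsUnit δc.det := (Matrix.isUnit_iff_isUnit_det δc).mp hδcu
  have hδcT : δcᵀ = γcᵀ * Jc * γc⁻¹ * Jc := by
    rw [hδcf, Matrix.transpose_mul, Matrix.transpose_mul, Matrix.transpose_mul,
      Matrix.transpose_transpose, hJcT]
    simp only [Matrix.mul_assoc]
  have hγcTdet : IsUnit γcᵀ.det := by rw [Matrix.det_transpose]; exact hγcdet
  have hδcinv : δc⁻¹ = γc⁻¹ * (Jc * (γcᵀ * Jc)) := by
    rw [hδcf, Matrix.mul_inv_rev, Matrix.mul_inv_rev, Matrix.mul_inv_rev, hJcinv,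
      Matrix.transpose_nonsing_inv, Matrix.nonsing_inv_nonsing_inv _ hγcTdet]
  have hkey : γc⁻¹ * Jc * δcᵀ = δc⁻¹ * (γc⁻¹ * Jc) := by
    rw [hδcT, hδcinv]
    simp only [Matrix.mul_assoc]
  -- root machinery
  have hroot : ∀ z : ℂ,
      (z • (1 : Matrix (Fin (2 * n)) (Fin (2 * n)) ℂ) - δc).det = 0 ↔ ∃ k, μ k = z := by
    intro z
    rw [← my_eval_charpoly, hchar]
    rw [Polynomial.eval_prod]
    rw [Finset.prod_eq_zero_iff]
    constructor
    · rintro ⟨k, -, hk⟩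
      rw [Polynomial.eval_sub, Polynomial.eval_X, Polynomial.eval_C, sub_eq_zero] at hk
      exact ⟨k, hk.symm⟩
    · rintro ⟨k, hk⟩
      exact ⟨k, Finset.mem_univ _, by
        rw [Polynomial.eval_sub, Polynomial.eval_X, Polynomial.eval_C, sub_eq_zero, hk]⟩
  have hμ0 : ∀ k, μ k ≠ 0 := by
    intro k hk0
    have h := (hroot 0).mpr ⟨k, hk0⟩
    rw [zero_smul, zero_sub, Matrix.det_neg] at h
    rcases mul_eq_zero.mp h with h' | h'
    · exact pow_ne_zero _ (neg_ne_zero.mpr one_ne_zero) h'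
    · exact hδcdet.ne_zero h'
  have hTdet : ∀ z : ℂ, (z • (1 : Matrix (Fin (2 * n)) (Fin (2 * n)) ℂ) - δcᵀ).det
      = (z • 1 - δc).det := by
    intro z
    rw [show z • (1 : Matrix (Fin (2 * n)) (Fin (2 * n)) ℂ) - δcᵀ = (z • 1 - δc)ᵀ by
      rw [Matrix.transpose_sub, Matrix.transpose_smul, Matrix.transpose_one], Matrix.det_transpose]
  have hinvcl : ∀ k, ∃ j, μ j = (μ k)⁻¹ := by
    intro k
    apply (hroot _).mp
    have hBu : IsUnit (γc⁻¹ * Jc) := hγcinvu.mul hJcu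
    have hBinvu : IsUnit (γc⁻¹ * Jc)⁻¹ := (Matrix.isUnit_nonsing_inv_iff).mpr hBu
    have hBdet : IsUnit (γc⁻¹ * Jc).det := (Matrix.isUnit_iff_isUnit_det _).mp hBu
    have hδT : δcᵀ = (γc⁻¹ * Jc)⁻¹ * δc⁻¹ * ((γc⁻¹ * Jc)⁻¹)⁻¹ := by
      rw [Matrix.nonsing_inv_nonsing_inv _ hBdet, Matrix.mul_assoc, ← hkey,
        ← Matrix.mul_assoc, Matrix.nonsing_inv_mul _ hBdet, Matrix.one_mul]
    have e1 : ((μ k)⁻¹ • (1 : Matrix (Fin (2 * n)) (Fin (2 * n)) ℂ) - δcᵀ).det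
        = ((μ k)⁻¹ • 1 - δc⁻¹).det := by
      rw [hδT, show (μ k)⁻¹ • (1 : Matrix (Fin (2 * n)) (Fin (2 * n)) ℂ)
          - (γc⁻¹ * Jc)⁻¹ * δc⁻¹ * ((γc⁻¹ * Jc)⁻¹)⁻¹
          = (γc⁻¹ * Jc)⁻¹ * ((μ k)⁻¹ • 1 - δc⁻¹) * ((γc⁻¹ * Jc)⁻¹)⁻¹ by
        rw [Matrix.mul_sub, Matrix.sub_mul]
        congr 1
        rw [mul_smul_comm, smul_mul_assoc, Matrix.mul_one,
          Matrix.mul_nonsing_inv _ ((Matrix.isUnit_iff_isUnit_det _).mp hBinvu)]]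
      exact Matrix.det_conj hBinvu _
    have e2 : ((μ k)⁻¹ • (1 : Matrix (Fin (2 * n)) (Fin (2 * n)) ℂ) - δc⁻¹)
        = δc⁻¹ * (((μ k)⁻¹ • δc) - 1) := by
      rw [Matrix.mul_sub, mul_smul_comm, Matrix.nonsing_inv_mul _ hδcdet, Matrix.mul_one]
    have e3 : ((μ k)⁻¹ • δc) - 1 = (-(μ k)⁻¹) • (μ k • (1 : Matrix (Fin (2 * n)) (Fin (2 * n)) ℂ) - δc) := by
      rw [smul_sub, smul_smul, neg_mul, inv_mul_cancel₀ (hμ0 k), neg_smul, one_smul,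
        neg_smul, sub_neg_eq_add, neg_add_eq_sub]
    have e4 : (μ k • (1 : Matrix (Fin (2 * n)) (Fin (2 * n)) ℂ) - δc).det = 0 :=
      (hroot _).mpr ⟨k, rfl⟩
    rw [← hTdet, e1, e2, Matrix.det_mul, e3, Matrix.det_smul, e4, mul_zero, mul_zero]
  have hconjcl : ∀ k, ∃ j, μ j = (starRingEnd ℂ) (μ k) := by
    intro k
    apply (hroot _).mp
    have h0 : (μ k • (1 : Matrix (Fin (2 * n)) (Fin (2 * n)) ℂ) - δc).det = 0 :=
      (hroot _).mpr ⟨k, rfl⟩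
    have hdet2 := RingHom.map_det (starRingEnd ℂ)
      (μ k • (1 : Matrix (Fin (2 * n)) (Fin (2 * n)) ℂ) - δc)
    rw [h0, map_zero] at hdet2
    have hmm : ((starRingEnd ℂ).mapMatrix (μ k • (1 : Matrix (Fin (2 * n)) (Fin (2 * n)) ℂ) - δc))
        = (starRingEnd ℂ) (μ k) • 1 - δc := by
      rw [RingHom.mapMatrix_apply]
      ext a b
      rw [Matrix.map_apply, Matrix.sub_apply, Matrix.sub_apply, map_sub, Matrix.smul_apply,
        Matrix.smul_apply, smul_eq_mul, smul_eq_mul, _root_.map_mul]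
      congr 1
      · congr 1
        by_cases hab : a = b <;> simp [Matrix.one_apply, hab]
      · exact Complex.conj_ofReal _
    rw [hmm] at hdet2
    exact hdet2.symm
  -- index involutions
  choose π hπ using hinvcl
  choose κ hκ using hconjcl
  have hππ : ∀ k, π (π k) = k := fun k => hinj (by rw [hπ, hπ, inv_inv])
  have hκκ : ∀ k, κ (κ k) = k := fun k => hinj (by rw [hκ, hκ, Complex.conj_conj])
  have hπκ : ∀ k, π (κ k) = κ (π k) := fun k => hinj (by rw [hπ, hκ, hκ, hπ, map_inv₀])
  have habsπ : ∀ k, ‖μ (π k)‖ = ‖μ k‖⁻¹ := fun k => by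
    rw [hπ, norm_inv]
  have habsκ : ∀ k, ‖μ (κ k)‖ = ‖μ k‖ := fun k => by
    rw [hκ, Complex.norm_conj]
  have habspos : ∀ k, 0 < ‖μ k‖ := fun k =>
    norm_pos_iff.mpr (hμ0 k)
  obtain ⟨i₀, hl⟩ : ∃ k, 1 < ‖μ k‖ := by
    obtain ⟨i₁, hi₁⟩ := habs
    rcases lt_or_gt_of_ne hi₁ with h | h
    · exact ⟨π i₁, by rw [habsπ]; exact (one_lt_inv₀ (habspos i₁)).mpr h⟩
    · exact ⟨i₁, h⟩
  -- the type function
  set t : Fin (2 * n) → ℕ :=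
    fun k => if k = i₀ ∨ k = κ i₀ then 0 else if k = π i₀ ∨ k = κ (π i₀) then 2 else 1
    with htdef
  have hagt : ∀ k, (k = i₀ ∨ k = κ i₀) → 1 < ‖μ k‖ := by
    rintro k (rfl | rfl)
    · exact hl
    · rw [habsκ]; exact hl
  have halt : ∀ k, (k = π i₀ ∨ k = κ (π i₀)) → ‖μ k‖ < 1 := by
    rintro k (rfl | rfl)
    · rw [habsπ]; exact inv_lt_one_of_one_lt₀ hl
    · rw [habsκ, habsπ]; exact inv_lt_one_of_one_lt₀ hl
  have hdisj : ∀ k, (k = i₀ ∨ k = κ i₀) → ¬(k = π i₀ ∨ k = κ (π i₀)) := fun k h1 h2 =>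
    absurd (halt k h2) (not_lt.mpr (le_of_lt (hagt k h1)))
  have ht0 : ∀ k, t k = 0 ↔ (k = i₀ ∨ k = κ i₀) := by
    intro k
    constructor
    · intro h
      by_contra hc
      simp only [htdef, if_neg hc] at h
      split_ifs at h <;> omega
    · intro h; simp only [htdef, if_pos h]
  have ht2 : ∀ k, t k = 2 ↔ (k = π i₀ ∨ k = κ (π i₀)) := by
    intro k
    constructor
    · intro h
      by_contra hc
      simp only [htdef] at h
      split_ifs at h with h1 <;> first | omega | exact hc (by assumption)
    · intro h
      have h1 : ¬(k = i₀ ∨ k = κ i₀) := fun hh => hdisj k hh h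
      simp only [htdef, if_neg h1, if_pos h]
  have htle : ∀ k, t k ≤ 2 := by
    intro k; simp only [htdef]; split_ifs <;> omega
  have hπinj : Function.Injective π := Function.LeftInverse.injective hππ
  have hκinj : Function.Injective κ := Function.LeftInverse.injective hκκ
  have hκπfix : κ (π i₀) = π i₀ ↔ κ i₀ = i₀ := by
    constructor
    · intro h; exact hπinj (by rw [hπκ, h])
    · intro h; rw [← hπκ, h]
  have htπ : ∀ k, t (π k) = 2 - t k := by
    intro k
    by_cases h0 : k = i₀ ∨ k = κ i₀
    · have h2' : π k = π i₀ ∨ π k = κ (π i₀) := by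
        rcases h0 with rfl | rfl
        · exact Or.inl rfl
        · exact Or.inr (by rw [hπκ])
      rw [(ht2 _).mpr h2', (ht0 _).mpr h0]
    · by_cases h2 : k = π i₀ ∨ k = κ (π i₀)
      · have h0' : π k = i₀ ∨ π k = κ i₀ := by
          rcases h2 with rfl | rfl
          · exact Or.inl (hππ i₀)
          · exact Or.inr (by rw [hπκ, hππ])
        rw [(ht0 _).mpr h0', (ht2 _).mpr h2]
      · have ha : ¬(π k = i₀ ∨ π k = κ i₀) := by
          rintro (h | h)
          · exact h2 (Or.inl (by rw [← hππ k, h]))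
          · exact h2 (Or.inr (hπinj (by rw [h, hπκ, hππ])))
        have hb : ¬(π k = π i₀ ∨ π k = κ (π i₀)) := by
          rintro (h | h)
          · exact h0 (Or.inl (hπinj h))
          · exact h0 (Or.inr (hπinj (h.trans (hπκ i₀).symm)))
        have e1 : t (π k) = 1 := by simp only [htdef, if_neg ha, if_neg hb]
        have e2 : t k = 1 := by simp only [htdef, if_neg h0, if_neg h2]
        rw [e1, e2]
  have htκ : ∀ k, t (κ k) = t k := by
    intro k
    by_cases h0 : k = i₀ ∨ k = κ i₀
    · have h0' : κ k = i₀ ∨ κ k = κ i₀ := by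
        rcases h0 with rfl | rfl
        · exact Or.inr rfl
        · exact Or.inl (hκκ i₀)
      rw [(ht0 _).mpr h0', (ht0 _).mpr h0]
    · by_cases h2 : k = π i₀ ∨ k = κ (π i₀)
      · have h2' : κ k = π i₀ ∨ κ k = κ (π i₀) := by
          rcases h2 with rfl | rfl
          · exact Or.inr rfl
          · exact Or.inl (by rw [hκκ])
        rw [(ht2 _).mpr h2', (ht2 _).mpr h2]
      · have ha : ¬(κ k = i₀ ∨ κ k = κ i₀) := by
          rintro (h | h)
          · exact h0 (Or.inr (by rw [← h, hκκ]))
          · exact h0 (Or.inl (hκinj h))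
        have hb : ¬(κ k = π i₀ ∨ κ k = κ (π i₀)) := by
          rintro (h | h)
          · exact h2 (Or.inr (by rw [← h, hκκ]))
          · exact h2 (Or.inl (hκinj h))
        simp only [htdef, if_neg ha, if_neg hb, if_neg h0, if_neg h2]
  set i : ℕ := if κ i₀ = i₀ then 1 else 2 with hidef
  have hi12 : i = 1 ∨ i = 2 := by
    rw [hidef]; split_ifs
    · exact Or.inl rfl
    · exact Or.inr rfl
  have hset0 : (Finset.univ.filter fun k => t k = 0) = {i₀, κ i₀} := by
    ext k
    simp only [Finset.mem_filter, Finset.mem_univ, true_and, Finset.mem_insert,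
      Finset.mem_singleton]
    exact ht0 k
  have hcard0 : (Finset.univ.filter fun k => t k = 0).card = i := by
    rw [hset0, hidef]
    by_cases h : κ i₀ = i₀
    · rw [if_pos h, h]; simp
    · rw [if_neg h, Finset.card_insert_of_notMem
        (fun hmem => h (Finset.mem_singleton.mp hmem).symm), Finset.card_singleton]
  have hset2 : (Finset.univ.filter fun k => t k = 2) = {π i₀, κ (π i₀)} := by
    ext k
    simp only [Finset.mem_filter, Finset.mem_univ, true_and, Finset.mem_insert,
      Finset.mem_singleton]
    exact ht2 k
  have hcard2 : (Finset.univ.filter fun k => t k = 2).card = i := by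
    rw [hset2, hidef]
    by_cases h : κ i₀ = i₀
    · rw [if_pos h, hκπfix.mpr h]; simp
    · rw [if_neg h, Finset.card_insert_of_notMem
        (fun hmem => h (hκπfix.mp (Finset.mem_singleton.mp hmem).symm)),
        Finset.card_singleton]
  have h2i : 2 * i ≤ 2 * n := by
    by_cases h : κ i₀ = i₀
    · rw [hidef, if_pos h]; omega
    · rw [hidef, if_neg h]
      have d1 : i₀ ≠ κ i₀ := fun hh => h hh.symm
      have d2 : π i₀ ≠ κ (π i₀) := fun hh => h (hκπfix.mp hh.symm)
      have d3 : ¬(i₀ = π i₀ ∨ i₀ = κ (π i₀)) := hdisj i₀ (Or.inl rfl)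
      have d4 : ¬(κ i₀ = π i₀ ∨ κ i₀ = κ (π i₀)) := hdisj (κ i₀) (Or.inr rfl)
      push_neg at d3 d4
      have hc : ({i₀, κ i₀, π i₀, κ (π i₀)} : Finset (Fin (2 * n))).card = 4 := by
        rw [Finset.card_insert_of_notMem (by simp [d1, d3.1, d3.2]),
          Finset.card_insert_of_notMem (by simp [d4.1, d4.2]),
          Finset.card_insert_of_notMem (by simp [d2]), Finset.card_singleton]
      have hle4 := Finset.card_le_univ ({i₀, κ i₀, π i₀, κ (π i₀)} : Finset (Fin (2 * n)))
      rw [hc, Fintype.card_fin] at hle4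
      omega
  -- sorting
  set σ : Equiv.Perm (Fin (2 * n)) := Tuple.sort t with hσdef
  have hmono : Monotone (t ∘ σ) := Tuple.monotone_sort t
  have hcards : ∀ vv : ℕ, (Finset.univ.filter fun a => t (σ a) = vv).card
      = (Finset.univ.filter fun k => t k = vv).card := by
    intro vv
    rw [← Fintype.card_subtype, ← Fintype.card_subtype]
    exact Fintype.card_congr (σ.subtypeEquiv (fun a => Iff.rfl))
  have hbt : ∀ a : Fin (2 * n), t (σ a) = blockIdx n i a := by
    have hmb := monotone_three_blocks hmono (fun a => htle (σ a))
      (by show (Finset.univ.filter fun a => t (σ a) = 0).card = i; rw [hcards 0, hcard0])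
      (by show (Finset.univ.filter fun a => t (σ a) = 2).card = i; rw [hcards 2, hcard2])
    intro a
    rw [show t (σ a) = (t ∘ σ) a from rfl, hmb a]
    rfl
  -- reindexed eigenvalue data
  set ν : Fin (2 * n) → ℂ := fun a => μ (σ a) with hνdef
  have hνinj : Function.Injective ν := fun a b h => σ.injective (hinj h)
  set Pp : Fin (2 * n) → Fin (2 * n) := fun a => σ.symm (π (σ a)) with hPdef
  set Kk : Fin (2 * n) → Fin (2 * n) := fun a => σ.symm (κ (σ a)) with hKdef
  have hσP : ∀ a, σ (Pp a) = π (σ a) := fun a => by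
    simp only [hPdef, Equiv.apply_symm_apply]
  have hσK : ∀ a, σ (Kk a) = κ (σ a) := fun a => by
    simp only [hKdef, Equiv.apply_symm_apply]
  have hνP : ∀ a, ν (Pp a) = (ν a)⁻¹ := fun a => by
    simp only [hνdef]; rw [hσP, hπ]
  have hνK : ∀ a, ν (Kk a) = (starRingEnd ℂ) (ν a) := fun a => by
    simp only [hνdef]; rw [hσK, hκ]
  have hν0 : ∀ a, ν a ≠ 0 := fun a => hμ0 _
  have hPP : ∀ a, Pp (Pp a) = a := fun a => by
    simp only [hPdef, Equiv.apply_symm_apply, hππ, Equiv.symm_apply_apply]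
  have hKK : ∀ a, Kk (Kk a) = a := fun a => by
    simp only [hKdef, Equiv.apply_symm_apply, hκκ, Equiv.symm_apply_apply]
  have hbtP : ∀ a, blockIdx n i (Pp a) = 2 - blockIdx n i a := fun a => by
    rw [← hbt, ← hbt, hσP, htπ]
  have hbtK : ∀ a, blockIdx n i (Kk a) = blockIdx n i a := fun a => by
    rw [← hbt, ← hbt, hσK, htκ]
  -- eigenvectors
  have hev : ∀ a : Fin (2 * n), ∃ w : Fin (2 * n) → ℂ, w ≠ 0 ∧ δc *ᵥ w = ν a • w ∧
      (Kk a = a → ∀ b, (starRingEnd ℂ) (w b) = w b) := by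
    intro a
    by_cases hKa : Kk a = a
    · have hreal : (((ν a).re : ℝ) : ℂ) = ν a :=
        Complex.conj_eq_iff_re.mp (by rw [← hνK, hKa])
      set r : ℝ := (ν a).re with hrdef
      have hdc : ((r • (1 : Matrix (Fin (2 * n)) (Fin (2 * n)) ℝ) - δ).map f)
          = (r : ℂ) • 1 - δc := by
        ext a' b'
        rw [Matrix.map_apply, Matrix.sub_apply, Matrix.sub_apply, map_sub, Matrix.smul_apply,
          Matrix.smul_apply, smul_eq_mul, smul_eq_mul, _root_.map_mul]
        congr 1
        congr 1
        by_cases hab : a' = b' <;> simp [Matrix.one_apply, hab]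
      have hdet0 : (r • (1 : Matrix (Fin (2 * n)) (Fin (2 * n)) ℝ) - δ).det = 0 := by
        have h1 : f ((r • (1 : Matrix (Fin (2 * n)) (Fin (2 * n)) ℝ) - δ).det) = 0 := by
          rw [RingHom.map_det, RingHom.mapMatrix_apply, hdc,
            show ((r : ℂ) • (1 : Matrix (Fin (2 * n)) (Fin (2 * n)) ℂ) - δc)
              = ν a • 1 - δc by rw [hreal]]
          exact (hroot _).mpr ⟨σ a, rfl⟩
        have h2 : ((((r • (1 : Matrix (Fin (2 * n)) (Fin (2 * n)) ℝ) - δ).det : ℝ)) : ℂ) = 0 := by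
          rw [← congrFun Complex.coe_algebraMap]; exact h1
        exact_mod_cast h2
      obtain ⟨v0, hv0ne, hv0⟩ := (Matrix.exists_mulVec_eq_zero_iff).mpr hdet0
      have hδv : δ *ᵥ v0 = r • v0 := by
        rw [Matrix.sub_mulVec, Matrix.smul_mulVec, Matrix.one_mulVec, sub_eq_zero] at hv0
        exact hv0.symm
      refine ⟨fun b => ((v0 b : ℝ) : ℂ), ?_, ?_, fun _ b => Complex.conj_ofReal _⟩
      · intro hz
        apply hv0ne
        funext b
        have h3 := congrFun hz b
        simpa using h3
      · funext b
        have lhs : (δc *ᵥ fun b => ((v0 b : ℝ) : ℂ)) b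
            = ∑ c, ((δ b c : ℝ) : ℂ) * ((v0 c : ℝ) : ℂ) := by
          rw [Matrix.mulVec, dotProduct]
          refine Finset.sum_congr rfl fun c _ => ?_
          congr 1
        rw [lhs]
        have : (∑ c, ((δ b c : ℝ) : ℂ) * ((v0 c : ℝ) : ℂ)) = (((δ *ᵥ v0) b : ℝ) : ℂ) := by
          rw [Matrix.mulVec, dotProduct]
          push_cast
          try rfl
        rw [this, hδv]
        show  (((r • v0) b : ℝ) : ℂ) = ν a * _
        rw [Pi.smul_apply, smul_eq_mul]
        push_cast
        rw [hreal]
    · have hdet0 : (ν a • (1 : Matrix (Fin (2 * n)) (Fin (2 * n)) ℂ) - δc).det = 0 :=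
        (hroot _).mpr ⟨σ a, rfl⟩
      obtain ⟨v0, hv0ne, hv0⟩ := (Matrix.exists_mulVec_eq_zero_iff).mpr hdet0
      refine ⟨v0, hv0ne, ?_, fun h => absurd h hKa⟩
      rw [Matrix.sub_mulVec, Matrix.smul_mulVec, Matrix.one_mulVec, sub_eq_zero] at hv0
      exact hv0.symm
  choose w hwne hweig hwreal using hev
  have hstar : ∀ u : Fin (2 * n) → ℂ, δc *ᵥ (fun b => (starRingEnd ℂ) (u b))
      = fun b => (starRingEnd ℂ) ((δc *ᵥ u) b) := by
    intro u
    funext b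
    show ∑ c, δc b c * (starRingEnd ℂ) (u c) = (starRingEnd ℂ) (∑ c, δc b c * u c)
    rw [map_sum]
    refine Finset.sum_congr rfl fun c _ => ?_
    rw [_root_.map_mul]
    congr 1
    exact (Complex.conj_ofReal _).symm
  set v : Fin (2 * n) → Fin (2 * n) → ℂ :=
    fun a => if a ≤ Kk a then w a else fun b => (starRingEnd ℂ) (w (Kk a) b) with hvdef
  have hveig : ∀ a, δc *ᵥ v a = ν a • v a := by
    intro a
    by_cases h : a ≤ Kk a
    · simp only [hvdef, if_pos h]; exact hweig a
    · simp only [hvdef, if_neg h]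
      rw [hstar (w (Kk a)), hweig (Kk a)]
      funext b
      show (starRingEnd ℂ) ((ν (Kk a) • w (Kk a)) b) = _
      rw [Pi.smul_apply, Pi.smul_apply, smul_eq_mul, smul_eq_mul, _root_.map_mul,
        show (starRingEnd ℂ) (ν (Kk a)) = ν a from by rw [← hνK, hKK]]
  have hvne : ∀ a, v a ≠ 0 := by
    intro a
    by_cases h : a ≤ Kk a
    · simp only [hvdef, if_pos h]; exact hwne a
    · simp only [hvdef, if_neg h]
      intro hz
      apply hwne (Kk a)
      funext b
      have h2 := congrFun hz b
      simp only [Pi.zero_apply] at h2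
      rw [starRingEnd_apply] at h2
      exact star_eq_zero.mp h2
  have hvconj : ∀ a b, v (Kk a) b = (starRingEnd ℂ) (v a b) := by
    intro a b
    rcases lt_trichotomy a (Kk a) with hlt | heq | hgt
    · have h1 : v a b = w a b := by simp only [hvdef, if_pos (le_of_lt hlt)]
      have hKle : ¬ (Kk a ≤ Kk (Kk a)) := by rw [hKK]; exact not_le.mpr hlt
      have h2 : v (Kk a) b = (starRingEnd ℂ) (w (Kk (Kk a)) b) := by
        simp only [hvdef, if_neg hKle]
      rw [h1, h2, hKK]
    · have h1 : v a b = w a b := by simp only [hvdef, if_pos (le_of_eq heq)]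
      rw [← heq, h1]
      exact (hwreal a heq.symm b).symm
    · have h2 : v a b = (starRingEnd ℂ) (w (Kk a) b) := by
        simp only [hvdef, if_neg (not_le.mpr hgt)]
      have h1 : v (Kk a) b = w (Kk a) b := by
        simp only [hvdef, if_pos (show Kk a ≤ Kk (Kk a) from by rw [hKK]; exact le_of_lt hgt)]
      rw [h1, h2, Complex.conj_conj]
  -- the eigenvector matrix
  set V : Matrix (Fin (2 * n)) (Fin (2 * n)) ℂ := Matrix.of fun b a => v a b with hVdef
  have hVu : IsUnit V := by
    rw [← Matrix.linearIndependent_cols_iff_isUnit]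
    have he : ∀ a, Module.End.HasEigenvector (Matrix.mulVecLin δc) (ν a) (v a) := by
      intro a
      rw [Module.End.hasEigenvector_iff]
      refine ⟨Module.End.mem_eigenspace_iff.mpr ?_, hvne a⟩
      show δc *ᵥ v a = ν a • v a
      exact hveig a
    exact Module.End.eigenvectors_linearIndependent' (Matrix.mulVecLin δc) ν hνinj v he
  have hVD : δc * V = V * Matrix.diagonal ν := by
    ext b a
    have h1 : (δc * V) b a = (δc *ᵥ v a) b := by rw [Matrix.mul_apply]; rfl
    rw [h1, hveig a, Matrix.mul_diagonal, Pi.smul_apply, smul_eq_mul, mul_comm]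
    rfl
  have hVdet : IsUnit V.det := (Matrix.isUnit_iff_isUnit_det V).mp hVu
  have hVTdet : IsUnit Vᵀ.det := by rw [Matrix.det_transpose]; exact hVdet
  have hdiagmul : Matrix.diagonal ν * Matrix.diagonal (fun a => (ν a)⁻¹) = 1 := by
    rw [Matrix.diagonal_mul_diagonal,
      show (fun a => ν a * (ν a)⁻¹) = fun _ => (1 : ℂ) from
        funext fun a => mul_inv_cancel₀ (hν0 a), Matrix.diagonal_one]
  have hTV : δcᵀ * (Vᵀ)⁻¹ = (Vᵀ)⁻¹ * Matrix.diagonal ν := by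
    have h1 : Vᵀ * δcᵀ = Matrix.diagonal ν * Vᵀ := by
      rw [← Matrix.transpose_mul, hVD, Matrix.transpose_mul, Matrix.diagonal_transpose]
    calc δcᵀ * (Vᵀ)⁻¹ = ((Vᵀ)⁻¹ * Vᵀ) * δcᵀ * (Vᵀ)⁻¹ := by
          rw [Matrix.nonsing_inv_mul _ hVTdet, Matrix.one_mul]
    _ = (Vᵀ)⁻¹ * (Vᵀ * δcᵀ) * (Vᵀ)⁻¹ := by simp only [Matrix.mul_assoc]
    _ = (Vᵀ)⁻¹ * (Matrix.diagonal ν * Vᵀ) * (Vᵀ)⁻¹ := by rw [h1]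
    _ = (Vᵀ)⁻¹ * Matrix.diagonal ν * (Vᵀ * (Vᵀ)⁻¹) := by simp only [Matrix.mul_assoc]
    _ = (Vᵀ)⁻¹ * Matrix.diagonal ν := by
          rw [Matrix.mul_nonsing_inv _ hVTdet, Matrix.mul_one]
  set A : Matrix (Fin (2 * n)) (Fin (2 * n)) ℂ := γc⁻¹ * (Jc * (Vᵀ)⁻¹) with hAdef
  have hA1 : δc⁻¹ * A = A * Matrix.diagonal ν := by
    calc δc⁻¹ * A = (δc⁻¹ * (γc⁻¹ * Jc)) * (Vᵀ)⁻¹ := by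
          rw [hAdef]; simp only [Matrix.mul_assoc]
    _ = (γc⁻¹ * Jc * δcᵀ) * (Vᵀ)⁻¹ := by rw [hkey]
    _ = (γc⁻¹ * Jc) * (δcᵀ * (Vᵀ)⁻¹) := by simp only [Matrix.mul_assoc]
    _ = (γc⁻¹ * Jc) * ((Vᵀ)⁻¹ * Matrix.diagonal ν) := by rw [hTV]
    _ = A * Matrix.diagonal ν := by rw [hAdef]; simp only [Matrix.mul_assoc]
  have hA2 : δc * A = A * Matrix.diagonal (fun a => (ν a)⁻¹) := by
    have h2 : A = δc * A * Matrix.diagonal ν := by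
      calc A = (δc * δc⁻¹) * A := by rw [Matrix.mul_nonsing_inv _ hδcdet, Matrix.one_mul]
      _ = δc * (δc⁻¹ * A) := by simp only [Matrix.mul_assoc]
      _ = δc * (A * Matrix.diagonal ν) := by rw [hA1]
      _ = δc * A * Matrix.diagonal ν := by simp only [Matrix.mul_assoc]
    calc δc * A
        = δc * A * (Matrix.diagonal ν * Matrix.diagonal fun a => (ν a)⁻¹) := by
          rw [hdiagmul, Matrix.mul_one]
    _ = (δc * A * Matrix.diagonal ν) * Matrix.diagonal (fun a => (ν a)⁻¹) := by
          simp only [Matrix.mul_assoc]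
    _ = A * Matrix.diagonal (fun a => (ν a)⁻¹) := by rw [← h2]
  set M : Matrix (Fin (2 * n)) (Fin (2 * n)) ℂ := V⁻¹ * A with hMdef
  have hDM : Matrix.diagonal ν * M = M * Matrix.diagonal (fun a => (ν a)⁻¹) := by
    have hVinvδ : V⁻¹ * δc = Matrix.diagonal ν * V⁻¹ := by
      calc V⁻¹ * δc = V⁻¹ * δc * (V * V⁻¹) := by
            rw [Matrix.mul_nonsing_inv _ hVdet, Matrix.mul_one]
      _ = V⁻¹ * (δc * V) * V⁻¹ := by simp only [Matrix.mul_assoc]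
      _ = V⁻¹ * (V * Matrix.diagonal ν) * V⁻¹ := by rw [hVD]
      _ = (V⁻¹ * V) * (Matrix.diagonal ν * V⁻¹) := by simp only [Matrix.mul_assoc]
      _ = Matrix.diagonal ν * V⁻¹ := by rw [Matrix.nonsing_inv_mul _ hVdet, Matrix.one_mul]
    calc Matrix.diagonal ν * M = (Matrix.diagonal ν * V⁻¹) * A := by
          rw [hMdef]; simp only [Matrix.mul_assoc]
    _ = (V⁻¹ * δc) * A := by rw [hVinvδ]
    _ = V⁻¹ * (δc * A) := by simp only [Matrix.mul_assoc]
    _ = V⁻¹ * (A * Matrix.diagonal fun a => (ν a)⁻¹) := by rw [hA2]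
    _ = M * Matrix.diagonal (fun a => (ν a)⁻¹) := by rw [hMdef]; simp only [Matrix.mul_assoc]
  have hM0 : ∀ c d, M c d ≠ 0 → c = Pp d := by
    intro c d hMcd
    have h1 : (Matrix.diagonal ν * M) c d = (M * Matrix.diagonal (fun a => (ν a)⁻¹)) c d := by
      rw [hDM]
    rw [Matrix.diagonal_mul, Matrix.mul_diagonal, mul_comm (M c d)] at h1
    exact hνinj ((mul_right_cancel₀ hMcd h1).trans (hνP d).symm)
  -- realification matrices
  set Q : Matrix (Fin (2 * n)) (Fin (2 * n)) ℝ :=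
    Matrix.of (fun b a => if a ≤ Kk a then (v a b).re else (v (Kk a) b).im) with hQdef
  set S : Matrix (Fin (2 * n)) (Fin (2 * n)) ℂ :=
    Matrix.of (fun c a => if c = a then (if a ≤ Kk a then 1 else -Complex.I)
      else if c = Kk a ∧ a < Kk a then Complex.I
      else if c = Kk a ∧ Kk a < a then 1 else 0) with hSdef
  have hQS : Q.map f * S = V := by
    ext b a
    rw [Matrix.mul_apply]
    show _ = v a b
    rcases lt_trichotomy a (Kk a) with hlt | heq | hgt
    · have hSsplit : ∀ c, S c a
          = (if c = a then (1 : ℂ) else 0) + (if c = Kk a then Complex.I else 0) := by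
        intro c
        simp only [hSdef, Matrix.of_apply]
        by_cases h1 : c = a
        · simp [h1, le_of_lt hlt, hlt.ne]
        · by_cases h2 : c = Kk a
          · simp [h1, h2, hlt, hlt.not_gt, hlt.ne']
          · simp [h1, h2]
      rw [Finset.sum_congr rfl fun c _ => by rw [hSsplit c]]
      simp only [mul_add, Finset.sum_add_distrib, mul_ite, mul_one, mul_zero,
        Finset.sum_ite_eq', Finset.mem_univ, if_true]
      have hq1 : Q b a = (v a b).re := by
        simp only [hQdef, Matrix.of_apply, if_pos (le_of_lt hlt)]
      have hq2 : Q b (Kk a) = (v a b).im := by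
        simp only [hQdef, Matrix.of_apply, hKK]
        rw [if_neg (not_le.mpr hlt)]
      rw [Matrix.map_apply, Matrix.map_apply, hq1, hq2,
        show f ((v a b).re) = (((v a b).re : ℝ) : ℂ) from congrFun Complex.coe_algebraMap _,
        show f ((v a b).im) = (((v a b).im : ℝ) : ℂ) from congrFun Complex.coe_algebraMap _]
      exact Complex.re_add_im (v a b)
    · rw [Finset.sum_eq_single a]
      · have hS1 : S a a = 1 := by
          simp [hSdef, le_of_eq heq]
        rw [hS1, mul_one, Matrix.map_apply]
        have hq1 : Q b a = (v a b).re := by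
          simp only [hQdef, Matrix.of_apply, if_pos (le_of_eq heq)]
        rw [hq1, show f ((v a b).re) = (((v a b).re : ℝ) : ℂ) from
          congrFun Complex.coe_algebraMap _]
        have hc : (starRingEnd ℂ) (v a b) = v a b := by
          have h := hvconj a b
          rw [← heq] at h
          exact h.symm
        exact Complex.conj_eq_iff_re.mp hc
      · intro c _ hca
        simp only [hSdef, Matrix.of_apply]
        rw [if_neg hca, if_neg (fun h => hca (h.1.trans heq.symm)),
          if_neg (fun h => hca (h.1.trans heq.symm)), mul_zero]
      · intro h; exact absurd (Finset.mem_univ _) h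
    · have hSsplit : ∀ c, S c a
          = (if c = a then -Complex.I else 0) + (if c = Kk a then (1 : ℂ) else 0) := by
        intro c
        simp only [hSdef, Matrix.of_apply]
        by_cases h1 : c = a
        · simp [h1, not_le.mpr hgt, hgt.ne']
        · by_cases h2 : c = Kk a
          · simp [h1, h2, hgt, lt_asymm hgt, hgt.ne]
          · simp [h1, h2]
      rw [Finset.sum_congr rfl fun c _ => by rw [hSsplit c]]
      simp only [mul_add, Finset.sum_add_distrib, mul_ite, mul_one, mul_zero,
        Finset.sum_ite_eq', Finset.mem_univ, if_true]
      have hq1 : Q b a = (v (Kk a) b).im := by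
        simp only [hQdef, Matrix.of_apply, if_neg (not_le.mpr hgt)]
      have hq2 : Q b (Kk a) = (v (Kk a) b).re := by
        have hle : Kk a ≤ Kk (Kk a) := by rw [hKK]; exact le_of_lt hgt
        simp only [hQdef, Matrix.of_apply, if_pos hle]
      rw [Matrix.map_apply, Matrix.map_apply, hq1, hq2,
        show f ((v (Kk a) b).im) = (((v (Kk a) b).im : ℝ) : ℂ) from
          congrFun Complex.coe_algebraMap _,
        show f ((v (Kk a) b).re) = (((v (Kk a) b).re : ℝ) : ℂ) from
          congrFun Complex.coe_algebraMap _]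
      rw [show v a b = (starRingEnd ℂ) (v (Kk a) b) from by
        have h := hvconj (Kk a) b; rwa [hKK] at h]
      apply Complex.ext <;> simp
  -- invertibility of Q and S
  have hdetQS : (Q.map f).det * S.det = V.det := by rw [← Matrix.det_mul, hQS]
  have hVdet0 : V.det ≠ 0 := hVdet.ne_zero
  have hQcdet : (Q.map f).det ≠ 0 := fun h => hVdet0 (by rw [← hdetQS, h, zero_mul])
  have hSdet0 : S.det ≠ 0 := fun h => hVdet0 (by rw [← hdetQS, h, mul_zero])
  have hSu : IsUnit S.det := isUnit_iff_ne_zero.mpr hSdet0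
  have hQcu : IsUnit (Q.map f) :=
    (Matrix.isUnit_iff_isUnit_det _).mpr (isUnit_iff_ne_zero.mpr hQcdet)
  have hQdet : IsUnit Q.det := by
    refine isUnit_iff_ne_zero.mpr (fun h => hQcdet ?_)
    have hh := RingHom.map_det f Q
    rw [h, map_zero, RingHom.mapMatrix_apply] at hh
    exact hh.symm
  have hQu : IsUnit Q := (Matrix.isUnit_iff_isUnit_det Q).mpr hQdet
  have hQceq : Q.map f = V * S⁻¹ := by
    rw [← hQS, Matrix.mul_assoc, Matrix.mul_nonsing_inv _ hSu, Matrix.mul_one]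
  have hQcinv : (Q.map f)⁻¹ = S * V⁻¹ := by
    rw [hQceq, Matrix.mul_inv_rev, Matrix.nonsing_inv_nonsing_inv _ hSu]
  -- the conjugating matrix
  set x : Matrix (Fin (2 * n)) (Fin (2 * n)) ℝ := γ * Q with hxdef
  have hxu : IsUnit x := hγ.mul hQu
  have hxc : x.map f = γc * Q.map f := by
    rw [hxdef, Matrix.map_mul, ← hγcdef]
  have hcancel : ∀ X : Matrix (Fin (2 * n)) (Fin (2 * n)) ℂ, γc⁻¹ * (γc * X) = X := fun X => by
    rw [← Matrix.mul_assoc, Matrix.nonsing_inv_mul _ hγcdet, Matrix.one_mul]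
  have hMT : Mᵀ = V⁻¹ * (Jc * ((γc⁻¹)ᵀ * (V⁻¹)ᵀ)) := by
    rw [hMdef, hAdef, Matrix.transpose_mul, Matrix.transpose_mul, Matrix.transpose_mul,
      hJcT, Matrix.transpose_nonsing_inv, Matrix.transpose_transpose]
    simp only [Matrix.mul_assoc]
  have hgmap : (x⁻¹ * γ * theta (2 * n) x).map f = S * (Mᵀ * (Sᵀ * Jc)) := by
    have h1 : (theta (2 * n) x).map f = Jc * ((x.map f)⁻¹)ᵀ * Jc := by
      unfold theta
      simp only [Matrix.map_mul]
      rw [Matrix.transpose_map, hmapinv x hxu, ← hJcdef]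
    have h2 : (x⁻¹ * γ * theta (2 * n) x).map f
        = (x.map f)⁻¹ * γc * (Jc * ((x.map f)⁻¹)ᵀ * Jc) := by
      simp only [Matrix.map_mul]
      rw [hmapinv x hxu, h1, ← hγcdef]
    rw [h2, hxc, Matrix.mul_inv_rev, hQcinv, Matrix.transpose_mul, Matrix.transpose_mul,
      hMT]
    simp only [Matrix.mul_assoc]
    rw [hcancel]
  -- support lemmas
  have hSsupp : ∀ c d, S c d ≠ 0 → blockIdx n i c = blockIdx n i d := by
    intro c d h
    simp only [hSdef, Matrix.of_apply] at h
    split_ifs at h with h1 h2 h3 h4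
    · rw [h1]
    · rw [h1]
    · rw [h3.1, hbtK]
    · rw [h4.1, hbtK]
    · exact absurd rfl h
  have hMTsupp : ∀ c d, Mᵀ c d ≠ 0 → blockIdx n i d = 2 - blockIdx n i c := by
    intro c d h
    rw [Matrix.transpose_apply] at h
    rw [hM0 d c h, hbtP]
  have hJsupp : ∀ e b', Jc e b' ≠ 0 → blockIdx n i e = 2 - blockIdx n i b' := by
    intro e b' h
    apply blockIdx_rev h2i
    by_contra hcon
    apply h
    rw [hJcdef, Matrix.map_apply, Jmat_apply, if_neg hcon, map_zero]
  -- conclusion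
  refine ⟨x, i, hxu, hi12, h2i, ?_⟩
  intro a b hab
  have hzero : (S * (Mᵀ * (Sᵀ * Jc))) a b = 0 := by
    rw [Matrix.mul_apply]
    apply Finset.sum_eq_zero
    intro c _
    by_cases h1 : S a c = 0
    · rw [h1, zero_mul]
    · have hz2 : (Mᵀ * (Sᵀ * Jc)) c b = 0 := by
        rw [Matrix.mul_apply]
        apply Finset.sum_eq_zero
        intro d _
        by_cases h2 : Mᵀ c d = 0
        · rw [h2, zero_mul]
        · have hz3 : (Sᵀ * Jc) d b = 0 := by
            rw [Matrix.mul_apply]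
            apply Finset.sum_eq_zero
            intro e _
            by_cases h4 : Sᵀ d e = 0
            · rw [h4, zero_mul]
            · by_cases h5 : Jc e b = 0
              · rw [h5, mul_zero]
              · exfalso
                rw [Matrix.transpose_apply] at h4
                have e1 := hSsupp a c h1
                have e2 := hMTsupp c d h2
                have e3 := hSsupp e d h4
                have e4 := hJsupp e b h5
                have l1 := blockIdx_le_two (n := n) (i := i) a
                have l2 := blockIdx_le_two (n := n) (i := i) b
                have l3 := blockIdx_le_two (n := n) (i := i) c
                have l4 := blockIdx_le_two (n := n) (i := i) d
                have l5 := blockIdx_le_two (n := n) (i := i) e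
                omega
          rw [hz3, mul_zero]
      rw [hz2, mul_zero]
  have hf0 : f ((x⁻¹ * γ * theta (2 * n) x) a b) = 0 := by
    have hh : ((x⁻¹ * γ * theta (2 * n) x).map f) a b = (S * (Mᵀ * (Sᵀ * Jc))) a b := by
      rw [hgmap]
    rw [Matrix.map_apply] at hh
    rw [hh, hzero]
  rw [show f ((x⁻¹ * γ * theta (2 * n) x) a b)
    = (((x⁻¹ * γ * theta (2 * n) x) a b : ℝ) : ℂ) from congrFun Complex.coe_algebraMap _] at hf0
  exact_mod_cast hf0
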